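/- For every n ≥ 7, the arrangement B_n can be transformed into the arrangement C_n = (2, 3, …, n−1, n, 1) in exactly (3n² − 38n + 128)/8 LRE moves when n is even, and in exactly (3n² − 32n + 93)/8 LRE moves when n is odd; that is, there exist that many generators g_1, g_2, … ∈ G with B_n ∘ g_1 ∘ ⋯ = C_n. -/

import Mathlib

def blockL {G : Type*} (s t r : G) : ℕ → List G
  | 0 => [t]
  | j+1 => s :: (blockL s t r j ++ [r, t])

def gsL {G : Type*} (s t r : G) : ℕ → List G
  | 0 => [s]
  | j+1 => gsL s t r j ++ blockL s t r j

lemma blockL_length {G : Type*} (s t r : G) (j : ℕ) :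
    (blockL s t r j).length = 3*j+1 := by
  induction j with
  | zero => rfl
  | succ j ih => simp [blockL, ih]; omega

lemma gsL_length {G : Type*} (s t r : G) (j : ℕ) :
    2 * (gsL s t r j).length + j = 3*j*j + 2 := by
  induction j with
  | zero => rfl
  | succ j ih => simp [gsL, blockL_length]; ring_nf; ring_nf at ih; omega

lemma blockL_mem {G : Type*} (s t r : G) (j : ℕ) :
    ∀ g ∈ blockL s t r j, g = s ∨ g = r ∨ g = t := by
  induction j with
  | zero => intro g hg; simp [blockL] at hg; tauto
  | succ j ih => intro g hg; simp [blockL] at hg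
                 rcases hg with h | h | h | h
                 · tauto
                 · exact ih g h
                 · tauto
                 · tauto

lemma gsL_mem {G : Type*} (s t r : G) (j : ℕ) :
    ∀ g ∈ gsL s t r j, g = s ∨ g = r ∨ g = t := by
  induction j with
  | zero => intro g hg; simp [gsL] at hg; tauto
  | succ j ih => intro g hg; simp [gsL] at hg
                 rcases hg with h | h
                 · exact ih g h
                 · exact blockL_mem s t r j g h

lemma blockL_prod {G : Type*} [Monoid G] (s t r : G) (j : ℕ) :
    (blockL s t r j).prod = s^j * (t*r)^j * t := by
  induction j with
  | zero => simp [blockL]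
  | succ j ih =>
      simp only [blockL, List.prod_cons, List.prod_append, ih, List.prod_nil, mul_one]
      rw [pow_succ' s, pow_succ (t*r)]
      simp [mul_assoc]

lemma gsL_succ_prod {G : Type*} [Monoid G] (s t r : G) (j : ℕ) :
    (gsL s t r (j+1)).prod = (gsL s t r j).prod * (blockL s t r j).prod := by
  simp [gsL, List.prod_append]
/-- For every `n ≥ 7`, the arrangement `B_n` can be transformed into the arrangement
`C_n = (2, 3, …, n, 1)` in exactly `(3n² - 38n + 128)/8` LRE moves when `n` is even and
`(3n² - 32n + 93)/8` moves when `n` is odd (the counts `k = gs.length` are expressed by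
the equivalent subtraction-free equations `8k + 38n = 3n² + 128` and
`8k + 32n = 3n² + 93`).  Permutations of `{1,…,n}` are modelled as `Equiv.Perm (Fin n)`
with `i : Fin n` representing the 1-based index `(i : ℕ) + 1`: `σ` is the left-rotation,
`τ` the transposition of the first two positions; with `c = ⌈n/2⌉ = (n+1)/2`, `B = B_n`
satisfies `B(1) = 1`, `B(i) = c + 1 - i` for `2 ≤ i ≤ c - 1`, `B(i) = i` for
`c ≤ i ≤ n`; and `C = C_n` satisfies `C(i) = i + 1` for `i < n`, `C(n) = 1`.
A move multiplies on the right by an element of `G = {σ, σ⁻¹, τ}`. -/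
theorem B_to_C (n : ℕ) (hn : 7 ≤ n)
    (σ τ B C : Equiv.Perm (Fin n))
    (hσ : ∀ i : Fin n, (σ i : ℕ) = ((i : ℕ) + 1) % n)
    (hτ : ∀ i : Fin n, (τ i : ℕ) =
      if (i : ℕ) = 0 then 1 else if (i : ℕ) = 1 then 0 else (i : ℕ))
    (hB : ∀ i : Fin n, (B i : ℕ) =
      if (i : ℕ) = 0 then 0
      else if (i : ℕ) < (n + 1) / 2 - 1 then (n + 1) / 2 - 1 - (i : ℕ)
      else (i : ℕ))
    (hC : ∀ i : Fin n, (C i : ℕ) = ((i : ℕ) + 1) % n) :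
    ∃ gs : List (Equiv.Perm (Fin n)),
      (n % 2 = 0 → 8 * gs.length + 38 * n = 3 * n ^ 2 + 128) ∧
      (n % 2 = 1 → 8 * gs.length + 32 * n = 3 * n ^ 2 + 93) ∧
      (∀ g ∈ gs, g = σ ∨ g = σ⁻¹ ∨ g = τ) ∧
      B * gs.prod = C := by
  have hmod : ∀ a : ℕ, a < 2*n → a % n = if a < n then a else a - n := by
    intro a ha
    split_ifs with h
    · exact Nat.mod_eq_of_lt h
    · rw [Nat.mod_eq_sub_mod (by omega)]
      exact Nat.mod_eq_of_lt (by omega)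
  have hσpow : ∀ (j : ℕ) (i : Fin n), ((σ^j) i : ℕ) = ((i : ℕ) + j) % n := by
    intro j
    induction j with
    | zero => intro i; simp [Nat.mod_eq_of_lt i.isLt]
    | succ j ih =>
        intro i
        rw [pow_succ, Equiv.Perm.mul_apply, ih (σ i), hσ i, Nat.mod_add_mod]
        congr 1
        omega
  have hσinv : ∀ (k : ℕ), k ≤ n → ∀ x : Fin n,
      (((σ^k)⁻¹) x : ℕ) = ((x : ℕ) + (n - k)) % n := by
    intro k hk x
    have h1 : (σ^k) ((σ^k)⁻¹ x) = x := Equiv.apply_symm_apply _ _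
    have h2 := hσpow k ((σ^k)⁻¹ x)
    rw [h1] at h2
    rw [h2, Nat.mod_add_mod]
    have h3 : ((((σ^k)⁻¹) x : ℕ)) + k + (n - k) = (((σ^k)⁻¹) x : ℕ) + n := by omega
    rw [h3, Nat.add_mod_right]
    exact (Nat.mod_eq_of_lt ((σ^k)⁻¹ x).isLt).symm
  have tpoint : ∀ (k : ℕ), k+3 ≤ n → ∀ y : Fin n,
      ((σ^(k+1) * τ * (σ^(k+1))⁻¹) y : ℕ) =
        if (y:ℕ) = k+1 then k+2 else if (y:ℕ) = k+2 then k+1 else (y:ℕ) := by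
    intro k hk y
    have hy := y.isLt
    simp only [Equiv.Perm.mul_apply]
    have hu := hσinv (k+1) (by omega) y
    have hult := ((σ^(k+1))⁻¹ y).isLt
    have hu2 : (((σ^(k+1))⁻¹ y : ℕ)) =
        if (y:ℕ) ≤ k then (y:ℕ) + (n-k-1) else (y:ℕ) - (k+1) := by
      rw [hu, hmod _ (by omega)]
      split_ifs <;> omega
    rw [hσpow (k+1) (τ ((σ^(k+1))⁻¹ y)), hτ ((σ^(k+1))⁻¹ y), hu2,
      hmod _ (by split_ifs <;> omega)]
    split_ifs <;> omega
  have hkey : ∀ j : ℕ, σ^(j+1) * (τ*σ⁻¹)^(j+1) * τ =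
      (σ^(j+1) * τ * (σ^(j+1))⁻¹) * (σ^j * (τ*σ⁻¹)^j * τ) := by
    intro j
    rw [pow_succ' (τ*σ⁻¹) j]
    conv_rhs => rw [pow_succ σ j, mul_inv_rev]
    rw [pow_succ σ j]
    simp [mul_assoc]
  have hE : ∀ j : ℕ, j+2 ≤ n → ∀ x : Fin n,
      ((σ^j * (τ*σ⁻¹)^j * τ) x : ℕ) =
        if (x:ℕ) = 0 then j+1 else if (x:ℕ) ≤ j+1 then (x:ℕ)-1 else (x:ℕ) := by
    intro j
    induction j with
    | zero =>
        intro hj x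
        simp only [pow_zero, one_mul]
        rw [hτ x]
        split_ifs <;> omega
    | succ j ih =>
        intro hj x
        rw [hkey j, Equiv.Perm.mul_apply, tpoint j (by omega),
          ih (by omega) x]
        have hx := x.isLt
        split_ifs <;> omega
  have hmain : ∀ j : ℕ, j+2 ≤ n → ∀ x : Fin n,
      (((gsL σ τ σ⁻¹ j).prod) x : ℕ) =
        if (x:ℕ) ≤ j then j+1-(x:ℕ) else if (x:ℕ) = n-1 then 0 else (x:ℕ)+1 := by
    intro j
    induction j with
    | zero =>
        intro hj x
        have hx := x.isLt
        show ((List.prod [σ]) x : ℕ) = _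
        rw [List.prod_singleton, hσ x, hmod _ (by omega)]
        split_ifs <;> omega
    | succ j ih =>
        intro hj x
        have hx := x.isLt
        rw [gsL_succ_prod, Equiv.Perm.mul_apply, blockL_prod,
          ih (by omega) ((σ^j * (τ*σ⁻¹)^j * τ) x), hE j (by omega) x]
        have hb := ((σ^j * (τ*σ⁻¹)^j * τ) x).isLt
        split_ifs <;> omega
  refine ⟨gsL σ τ σ⁻¹ ((n+1)/2 - 3), ?_, ?_, ?_, ?_⟩
  · intro hpar
    have hL := gsL_length σ τ σ⁻¹ ((n+1)/2 - 3)
    obtain ⟨q, hq1, hq2⟩ : ∃ q, n = 2*q+6 ∧ (n+1)/2 - 3 = q :=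
      ⟨(n+1)/2-3, by omega, rfl⟩
    rw [hq2] at hL ⊢
    have h2 : n^2 = 4*q^2 + 24*q + 36 := by rw [hq1]; ring
    ring_nf at hL h2 ⊢
    linarith [hL, h2, hq1]
  · intro hpar
    have hL := gsL_length σ τ σ⁻¹ ((n+1)/2 - 3)
    obtain ⟨q, hq1, hq2⟩ : ∃ q, n = 2*q+5 ∧ (n+1)/2 - 3 = q :=
      ⟨(n+1)/2-3, by omega, rfl⟩
    rw [hq2] at hL ⊢
    have h2 : n^2 = 4*q^2 + 20*q + 25 := by rw [hq1]; ring
    ring_nf at hL h2 ⊢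
    linarith [hL, h2, hq1]
  · intro g hg
    exact gsL_mem σ τ σ⁻¹ _ g hg
  · refine Equiv.ext fun x => Fin.val_injective ?_
    have hx := x.isLt
    have hy := ((gsL σ τ σ⁻¹ ((n+1)/2 - 3)).prod x).isLt
    simp only [Equiv.Perm.mul_apply]
    rw [hB, hC, hmain _ (by omega) x, hmod ((x:ℕ)+1) (by omega)]
    split_ifs <;> first | omega | exact absurd (by assumption) not_false
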